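/- Let h ≥ 2, let s = (s_1,…,s_m) with each s_i > 1, let G = ℤ_{s_1}×⋯×ℤ_{s_m}, and let z ∈ {0,1}^m. Then: (i) the cocycle μ_z extracted from the short exact sequence 1 → ⟨ζ_h⟩ → E/K → G → 0 via the transversal τ(x) = x + K (so μ_z(x,y) = ι⁻¹(τ(x) + τ(y) − τ(x+y))) satisfies μ_z(x,y) = Π_{i : z_i = 1} γ_{s_i}(x_i, y_i); and (ii) μ_z is a coboundary in Z²(G, ⟨ζ_h⟩) if and only if s_i is coprime to h whenever z_i = 1. -/

import Mathlib

open scoped BigOperators Pointwise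

noncomputable section

/-- `zeta k` is the complex `k`-th root of unity `exp(2π√-1/k)`. -/
def zeta (k : ℕ) : ℂ := Complex.exp (2 * Real.pi * Complex.I / k)

/-- Periodic autocorrelation of a map `f : A → ℤ_h` at shift `w`. -/
def AC {A : Type*} [AddCommGroup A] [Fintype A] (h : ℕ) (f : A → ZMod h) (w : A) : ℂ :=
  ∑ g : A, zeta h ^ (f g - f (g + w)).val

/-- The expansion `φ' : E → ℤ_h` of type `z` of an `h`-ary array `φ`:
`φ'(g) = φ(g mod s) + Σ_i ⌊g_i / s_i⌋ (mod h)`. -/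
def expand (m h : ℕ) (s z : Fin m → ℕ) (φ : (∀ i, ZMod (s i)) → ZMod h)
    (g : ∀ i, ZMod ((z i * (h - 1) + 1) * s i)) : ZMod h :=
  φ (fun i => ((g i).val : ZMod (s i))) + ((∑ i, (g i).val / s i : ℕ) : ZMod h)

/-- The set `L ⊆ E`. -/
def LSet (m h : ℕ) (s z : Fin m → ℕ) :
    Set (∀ i, ZMod ((z i * (h - 1) + 1) * s i)) :=
  {g | ∀ i, s i ∣ (g i).val ∧ (z i = 0 → (g i).val = 0)}

private theorem cast_val_mod {n t : ℕ} (hd : t ∣ n) (X : ℕ) :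
    ((X % n : ℕ) : ZMod t) = (X : ZMod t) := by
  conv_rhs => rw [← Nat.div_add_mod X n]
  push_cast
  rw [(ZMod.natCast_eq_zero_iff n t).2 hd]
  ring

/-- `L` as a subgroup of `E`. -/
def Lsub (m h : ℕ) (s z : Fin m → ℕ)
    [∀ i, NeZero ((z i * (h - 1) + 1) * s i)] :
    AddSubgroup (∀ i, ZMod ((z i * (h - 1) + 1) * s i)) where
  carrier := LSet m h s z
  zero_mem' := by
    intro i
    simp [ZMod.val_zero]
  add_mem' := by
    rintro a b ha hb i
    obtain ⟨ha1, ha2⟩ := ha i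
    obtain ⟨hb1, hb2⟩ := hb i
    have hval : ((a + b) i).val = ((a i).val + (b i).val) % ((z i * (h - 1) + 1) * s i) :=
      ZMod.val_add _ _
    constructor
    · rw [hval]
      exact (Nat.dvd_mod_iff (dvd_mul_left _ _)).2 (Nat.dvd_add ha1 hb1)
    · intro hzi
      rw [hval, ha2 hzi, hb2 hzi]
      simp
  neg_mem' := by
    rintro a ha i
    obtain ⟨ha1, ha2⟩ := ha i
    have hval : ((-a) i).val
        = if a i = 0 then 0 else (z i * (h - 1) + 1) * s i - (a i).val :=
      ZMod.neg_val _
    constructor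
    · rw [hval]
      split
      · exact dvd_zero _
      · exact Nat.dvd_sub (dvd_mul_left _ _) ha1
    · intro hzi
      rw [hval]
      have : a i = 0 := (ZMod.val_eq_zero _).1 (ha2 hzi)
      simp [this]

/-- `K = {g ∈ L : Σ_i g_i/s_i ≡ 0 (mod h)}` as a subgroup of `E`. -/
def Ksub (m h : ℕ) (s z : Fin m → ℕ)
    [∀ i, NeZero ((z i * (h - 1) + 1) * s i)]
    (hh : 2 ≤ h) (hs : ∀ i, 1 < s i) (hz : ∀ i, z i ≤ 1) :
    AddSubgroup (∀ i, ZMod ((z i * (h - 1) + 1) * s i)) where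
  carrier := {g | g ∈ LSet m h s z ∧ (h : ℕ) ∣ ∑ i, (g i).val / s i}
  zero_mem' := by
    refine ⟨(Lsub m h s z).zero_mem', ?_⟩
    simp [ZMod.val_zero]
  add_mem' := by
    rintro a b ⟨haL, haS⟩ ⟨hbL, hbS⟩
    refine ⟨(Lsub m h s z).add_mem' haL hbL, ?_⟩
    rw [← ZMod.natCast_eq_zero_iff] at haS hbS ⊢
    rw [Nat.cast_sum] at haS hbS ⊢
    have key : ∀ i, ((((a + b) i).val / s i : ℕ) : ZMod h)
        = (((a i).val / s i : ℕ) : ZMod h) + (((b i).val / s i : ℕ) : ZMod h) := by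
      intro i
      have hzi : z i = 0 ∨ z i = 1 := by have := hz i; omega
      have hval : ((a + b) i).val = ((a i).val + (b i).val) % ((z i * (h - 1) + 1) * s i) :=
        ZMod.val_add _ _
      rcases hzi with h0 | h1
      · have ha0 := (haL i).2 h0
        have hb0 := (hbL i).2 h0
        rw [hval, ha0, hb0]
        simp
      · have hc : z i * (h - 1) + 1 = h := by rw [h1]; omega
        obtain ⟨α, hα⟩ := (haL i).1
        obtain ⟨β, hβ⟩ := (hbL i).1
        have hspos : 0 < s i := by have := hs i; omega
        rw [hval, Nat.mod_mul_left_div_self, hα, hβ, ← Nat.mul_add,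
          Nat.mul_div_cancel_left _ hspos, Nat.mul_div_cancel_left _ hspos,
          Nat.mul_div_cancel_left _ hspos, hc, ZMod.natCast_mod, Nat.cast_add]
    rw [Finset.sum_congr rfl fun i _ => key i, Finset.sum_add_distrib, haS, hbS, add_zero]
  neg_mem' := by
    rintro a ⟨haL, haS⟩
    refine ⟨(Lsub m h s z).neg_mem' haL, ?_⟩
    rw [← ZMod.natCast_eq_zero_iff] at haS ⊢
    rw [Nat.cast_sum] at haS ⊢
    have key : ∀ i, ((((-a) i).val / s i : ℕ) : ZMod h)
        = -(((a i).val / s i : ℕ) : ZMod h) := by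
      intro i
      have hzi : z i = 0 ∨ z i = 1 := by have := hz i; omega
      have hval : ((-a) i).val
          = if a i = 0 then 0 else (z i * (h - 1) + 1) * s i - (a i).val :=
        ZMod.neg_val _
      by_cases h0 : a i = 0
      · rw [hval, if_pos h0, h0]
        simp [ZMod.val_zero]
      · rcases hzi with hz0 | hz1
        · exact absurd ((ZMod.val_eq_zero _).1 ((haL i).2 hz0)) h0
        · have hc : z i * (h - 1) + 1 = h := by rw [hz1]; omega
          obtain ⟨α, hα⟩ := (haL i).1
          have hspos : 0 < s i := by have := hs i; omega
          have hlt : (a i).val < (z i * (h - 1) + 1) * s i := ZMod.val_lt _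
          have hαle : α ≤ z i * (h - 1) + 1 := by
            rw [hα, mul_comm (z i * (h - 1) + 1) (s i)] at hlt
            have := Nat.lt_of_mul_lt_mul_left hlt
            omega
          have hsub : (z i * (h - 1) + 1) * s i - (a i).val
              = s i * ((z i * (h - 1) + 1) - α) := by
            rw [hα, mul_comm (z i * (h - 1) + 1) (s i)]
            exact (Nat.mul_sub _ _ _).symm
          rw [hval, if_neg h0, hsub, Nat.mul_div_cancel_left _ hspos, hα,
            Nat.mul_div_cancel_left _ hspos, Nat.cast_sub hαle, hc]
          simp
    rw [Finset.sum_congr rfl fun i _ => key i, Finset.sum_neg_distrib, haS, neg_zero]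

/-- The reduction-mod-`s` homomorphism `E →+ G`. -/
def resHom (m h : ℕ) (s z : Fin m → ℕ)
    [∀ i, NeZero ((z i * (h - 1) + 1) * s i)] :
    (∀ i, ZMod ((z i * (h - 1) + 1) * s i)) →+ (∀ i, ZMod (s i)) where
  toFun g i := ((g i).val : ZMod (s i))
  map_zero' := by
    funext i
    simp [ZMod.val_zero]
  map_add' a b := by
    funext i
    show (((a i + b i)).val : ZMod (s i)) = ((a i).val : ZMod (s i)) + ((b i).val : ZMod (s i))
    rw [ZMod.val_add, cast_val_mod (dvd_mul_left _ _), Nat.cast_add]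

/-- The homomorphism `β : E/K → G` induced by reduction mod `s`. -/
def betaHom (m h : ℕ) (s z : Fin m → ℕ)
    [∀ i, NeZero ((z i * (h - 1) + 1) * s i)]
    (hh : 2 ≤ h) (hs : ∀ i, 1 < s i) (hz : ∀ i, z i ≤ 1) :
    (∀ i, ZMod ((z i * (h - 1) + 1) * s i)) ⧸ Ksub m h s z hh hs hz →+ (∀ i, ZMod (s i)) :=
  QuotientAddGroup.lift (Ksub m h s z hh hs hz) (resHom m h s z) (by
    intro g hg
    funext i
    exact (ZMod.natCast_eq_zero_iff _ _).2 ((hg.1 i).1))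

/-- The transversal map `τ : G → E/K`, `τ(x) = x + K`
(embedding `x` with representatives `0 ≤ x_i < s_i`). -/
def tau (m h : ℕ) (s z : Fin m → ℕ)
    [∀ i, NeZero ((z i * (h - 1) + 1) * s i)]
    (hh : 2 ≤ h) (hs : ∀ i, 1 < s i) (hz : ∀ i, z i ≤ 1)
    (x : ∀ i, ZMod (s i)) :
    (∀ i, ZMod ((z i * (h - 1) + 1) * s i)) ⧸ Ksub m h s z hh hs hz :=
  QuotientAddGroup.mk (fun i => (((x i).val : ℕ) : ZMod ((z i * (h - 1) + 1) * s i)))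

/-- The injection `ι : ⟨ζ_h⟩ ≅ ℤ_h → E/K`, sending `ζ_h^j` to
`j • ((0,…,0,s_{i₀},0,…,0) + K)` for the fixed index `i₀` with `z i₀ = 1`. -/
def iota (m h : ℕ) (s z : Fin m → ℕ)
    [∀ i, NeZero ((z i * (h - 1) + 1) * s i)]
    (hh : 2 ≤ h) (hs : ∀ i, 1 < s i) (hz : ∀ i, z i ≤ 1)
    (i₀ : Fin m) (j : ZMod h) :
    (∀ i, ZMod ((z i * (h - 1) + 1) * s i)) ⧸ Ksub m h s z hh hs hz :=
  j.val • (QuotientAddGroup.mk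
    (Pi.single i₀ ((s i₀ : ℕ) : ZMod ((z i₀ * (h - 1) + 1) * s i₀))))

/-- `R` is a `(v,n,k,λ)`-relative difference set in the additive group `E`
relative to the (forbidden) subgroup `N`. -/
def IsAddRDS {E : Type*} [AddGroup E] (N : AddSubgroup E) (R : Set E)
    (v n k l : ℕ) : Prop :=
  N.index = v ∧ Nat.card N = n ∧ Nat.card R = k ∧
    (∀ r ∈ R, ∀ r' ∈ R, r - r' ∈ N → r = r') ∧
    ∀ x : E, x ∉ N → Nat.card {p : R × R // (p.1 : E) - (p.2 : E) = x} = l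

/-- A Butson Hadamard matrix in `BH(n,k)`. -/
def IsBH {ι : Type*} [Fintype ι] [DecidableEq ι] (n k : ℕ) (M : Matrix ι ι ℂ) : Prop :=
  Fintype.card ι = n ∧ (∀ a b, ∃ j : ℕ, M a b = zeta k ^ j) ∧
    M * M.conjTranspose = (n : ℂ) • (1 : Matrix ι ι ℂ)

end

private lemma zeta_pow_eq_iff {h : ℕ} (hh : 2 ≤ h) (a b : ℕ) :
    zeta h ^ a = zeta h ^ b ↔ (a : ZMod h) = (b : ZMod h) := by
  have hprim : IsPrimitiveRoot (zeta h) h := Complex.isPrimitiveRoot_exp h (by omega)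
  have hmod : ∀ a : ℕ, zeta h ^ a = zeta h ^ (a % h) := by
    intro a
    conv_lhs => rw [← Nat.div_add_mod a h]
    rw [pow_add, pow_mul, hprim.pow_eq_one, one_pow, one_mul]
  rw [ZMod.natCast_eq_natCast_iff]
  constructor
  · intro hab
    exact hprim.pow_inj (Nat.mod_lt a (by omega)) (Nat.mod_lt b (by omega))
      (by rw [← hmod, ← hmod]; exact hab)
  · intro hab
    rw [hmod a, hmod b, show a % h = b % h from hab]

/-- (i) the cocycle `μ_z` extracted from the short exact sequence
`1 → ⟨ζ_h⟩ →^ι E/K →^β G → 0` via the transversal `τ(x) = x + K`, i.e. the cocycle with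
`ι(μ_z(x,y)) = τ(x) + τ(y) - τ(x+y)` (`ι` being injective), satisfies
`μ_z(x,y) = Π_{i : z_i = 1} γ_{s_i}(x_i,y_i) = ζ_h^{Σ_{i : z_i = 1} ⌊(x_i+y_i)/s_i⌋}`;
(ii) `μ_z` is a coboundary in `Z²(G,⟨ζ_h⟩)` iff `s_i` is coprime to `h` whenever `z_i = 1`. -/
theorem muz_eq_prod_gamma_and_coboundary_iff
    (m h : ℕ) (s z : Fin m → ℕ)
    [∀ i, NeZero ((z i * (h - 1) + 1) * s i)]
    (hh : 2 ≤ h) (hs : ∀ i, 1 < s i) (hz : ∀ i, z i ≤ 1)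
    (i₀ : Fin m) (hi₀ : z i₀ = 1) :
    Function.Injective (iota m h s z hh hs hz i₀)
    ∧ (∀ x y : ∀ i, ZMod (s i),
        tau m h s z hh hs hz x + tau m h s z hh hs hz y - tau m h s z hh hs hz (x + y)
          = iota m h s z hh hs hz i₀
              (((∑ i, if z i = 1 then ((x i).val + (y i).val) / s i else 0 : ℕ)) : ZMod h))
    ∧ ((∃ f : (∀ i, ZMod (s i)) → ZMod h, f 0 = 0 ∧
          ∀ x y : ∀ i, ZMod (s i),
            (∏ i, zeta h ^ (if z i = 1 then ((x i).val + (y i).val) / s i else 0))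
              = zeta h ^ (f (x + y) - f x - f y).val)
        ↔ ∀ i, z i = 1 → Nat.Coprime (s i) h) := by
  
  haveI hNZh : NeZero h := ⟨by omega⟩
  have hn1 : ∀ i, z i = 1 → (z i * (h - 1) + 1) * s i = s i * h := by
    intro i hzi; rw [hzi, one_mul, Nat.sub_add_cancel (by omega), Nat.mul_comm]
  have hn0 : ∀ i, z i = 0 → (z i * (h - 1) + 1) * s i = s i := by
    intro i hzi; rw [hzi]; ring
  have hspos : ∀ i, 0 < s i := fun i => lt_trans Nat.zero_lt_one (hs i)
  refine ⟨?_, ?_, ?_⟩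
  · -- injectivity of iota
    intro j j' hjj'
    unfold iota at hjj'
    set P : ∀ i, ZMod ((z i * (h - 1) + 1) * s i) :=
      Pi.single i₀ ((s i₀ : ℕ) : ZMod ((z i₀ * (h - 1) + 1) * s i₀)) with hP
    rw [← QuotientAddGroup.mk_nsmul, ← QuotientAddGroup.mk_nsmul,
      QuotientAddGroup.eq] at hjj'
    have hsum := hjj'.2
    set u := j.val with hu
    set t := j'.val with ht
    have hut : u < h := j.val_lt
    have htt : t < h := j'.val_lt
    have h0 : ((s i₀ * h : ℕ) : ZMod ((z i₀ * (h - 1) + 1) * s i₀)) = 0 := by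
      rw [← hn1 i₀ hi₀]; exact ZMod.natCast_self _
    push_cast at h0
    have hw : ∀ i, ((-(u • P) + t • P) i)
        = if hii : i = i₀ then
            (((t + h - u) * s i₀ : ℕ) : ZMod ((z i * (h - 1) + 1) * s i)) else 0 := by
      intro i
      by_cases hii : i = i₀
      · subst hii
        rw [dif_pos rfl]
        simp only [Pi.add_apply, Pi.neg_apply, Pi.smul_apply, hP, Pi.single_eq_same]
        rw [nsmul_eq_mul, nsmul_eq_mul]
        push_cast [Nat.cast_sub (show u ≤ t + h by omega)]
        linear_combination -h0
      · rw [dif_neg hii]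
        simp [hP, Pi.single_eq_of_ne hii]
    have hsum2 : (∑ i, ((-(u • P) + t • P) i).val / s i) = (t + h - u) % h := by
      have hterm : ∀ i, ((-(u • P) + t • P) i).val / s i
          = if i = i₀ then ((t + h - u) % h) else 0 := by
        intro i
        rw [hw i]
        by_cases hii : i = i₀
        · subst hii
          rw [dif_pos rfl, if_pos rfl, ZMod.val_natCast, hn1 i hi₀,
            Nat.mod_mul_right_div_self, Nat.mul_div_cancel _ (hspos i)]
        · rw [dif_neg hii, if_neg hii]
          simp
      rw [Finset.sum_congr rfl fun i _ => hterm i,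
        Finset.sum_ite_eq' Finset.univ i₀ (fun _ => (t + h - u) % h),
        if_pos (Finset.mem_univ i₀)]
    rw [hsum2] at hsum
    have hz0 : (t + h - u) % h = 0 :=
      Nat.eq_zero_of_dvd_of_lt hsum (Nat.mod_lt _ (by omega)) |>.symm ▸ rfl
    have hdvd : h ∣ t + h - u := Nat.dvd_of_mod_eq_zero hz0
    have heq : t + h - u = h := Nat.eq_of_dvd_of_lt_two_mul (by omega) hdvd (by omega)
    exact ZMod.val_injective h (by omega : j.val = j'.val)
  · -- cocycle formula
    intro x y
    unfold tau iota
    set N : ℕ := ∑ i, if z i = 1 then ((x i).val + (y i).val) / s i else 0 with hN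
    set N' : ℕ := ((N : ZMod h)).val with hN'
    have hN'lt : N' < h := ZMod.val_lt _
    set P : ∀ i, ZMod ((z i * (h - 1) + 1) * s i) :=
      Pi.single i₀ ((s i₀ : ℕ) : ZMod ((z i₀ * (h - 1) + 1) * s i₀)) with hP
    set U : ∀ i, ZMod ((z i * (h - 1) + 1) * s i) :=
      fun i => (((if i = i₀ then (((x i₀).val + (y i₀).val) / s i₀ + h - N') * s i₀
        else (((x i).val + (y i).val) / s i) * s i : ℕ)) : ZMod ((z i * (h - 1) + 1) * s i)) with hU
    have h0 : ((s i₀ * h : ℕ) : ZMod ((z i₀ * (h - 1) + 1) * s i₀)) = 0 := by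
      rw [← hn1 i₀ hi₀]; exact ZMod.natCast_self _
    push_cast at h0
    have hUK : U ∈ Ksub m h s z hh hs hz := by
      constructor
      · intro i
        constructor
        · rw [hU, ZMod.val_natCast]
          refine (Nat.dvd_mod_iff (dvd_mul_left _ _)).2 ?_
          by_cases hii : i = i₀
          · subst hii; rw [if_pos rfl]; exact dvd_mul_left _ _
          · rw [if_neg hii]; exact dvd_mul_left _ _
        · intro hz0
          have hii : i ≠ i₀ := fun hc => by rw [hc, hi₀] at hz0; omega
          rw [hU, ZMod.val_natCast, if_neg hii, hn0 i hz0, Nat.mul_mod_left]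
      · rw [← ZMod.natCast_eq_zero_iff, Nat.cast_sum]
        have hterm : ∀ i, (((U i).val / s i : ℕ) : ZMod h)
            = (if z i = 1 then ((((x i).val + (y i).val) / s i : ℕ) : ZMod h) else 0)
              + (if i = i₀ then (((h - N' : ℕ)) : ZMod h) else 0) := by
          intro i
          have hzi : z i = 0 ∨ z i = 1 := by have := hz i; omega
          rcases hzi with hz0 | hz1
          · have hii : i ≠ i₀ := fun hc => by rw [hc, hi₀] at hz0; omega
            rw [hU, ZMod.val_natCast, if_neg hii, hn0 i hz0, Nat.mul_mod_left]
            simp [hz0, hii]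
          · rw [hU, ZMod.val_natCast, hn1 i hz1]
            by_cases hii : i = i₀
            · subst hii
              rw [if_pos rfl, if_pos rfl, if_pos hz1, Nat.mod_mul_right_div_self,
                Nat.mul_div_cancel _ (hspos i), ZMod.natCast_mod,
                Nat.cast_sub (le_trans hN'lt.le (Nat.le_add_left h _) : N' ≤ ((x i).val + (y i).val) / s i + h),
                Nat.cast_sub (le_of_lt hN'lt), Nat.cast_add]
              ring
            · rw [if_neg hii, if_neg hii, if_pos hz1, Nat.mod_mul_right_div_self,
                Nat.mul_div_cancel _ (hspos i), ZMod.natCast_mod, add_zero]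
        rw [Finset.sum_congr rfl fun i _ => hterm i, Finset.sum_add_distrib,
          Finset.sum_ite_eq' Finset.univ i₀ (fun _ => (((h - N' : ℕ)) : ZMod h)),
          if_pos (Finset.mem_univ i₀)]
        have hNsum : (N : ZMod h)
            = ∑ i, (if z i = 1 then ((((x i).val + (y i).val) / s i : ℕ) : ZMod h) else 0) := by
          rw [hN, Nat.cast_sum]
          exact Finset.sum_congr rfl fun i _ => by split <;> simp
        have hN'cast : ((N' : ℕ) : ZMod h) = (N : ZMod h) := by
          rw [hN']; exact ZMod.natCast_rightInverse _
        rw [← hNsum, Nat.cast_sub (le_of_lt hN'lt), hN'cast, ZMod.natCast_self]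
        ring
    rw [← QuotientAddGroup.mk_nsmul, ← QuotientAddGroup.mk_add, ← QuotientAddGroup.mk_sub,
      QuotientAddGroup.eq]
    have hD : -((fun i => (((x i).val : ℕ) : ZMod ((z i * (h - 1) + 1) * s i)))
          + (fun i => (((y i).val : ℕ) : ZMod ((z i * (h - 1) + 1) * s i)))
          - (fun i => ((((x + y) i).val : ℕ) : ZMod ((z i * (h - 1) + 1) * s i))))
        + N' • P = -U := by
      funext i
      have key : ((s i * (((x i).val + (y i).val) / s i) + ((x i).val + (y i).val) % s i : ℕ)
          : ZMod ((z i * (h - 1) + 1) * s i))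
          = (((x i).val + (y i).val : ℕ) : ZMod ((z i * (h - 1) + 1) * s i)) := by
        rw [Nat.div_add_mod]
      have hxy : ((x i + y i).val : ℕ) = ((x i).val + (y i).val) % s i := by
        haveI : NeZero (s i) := ⟨by have := hs i; omega⟩
        rw [ZMod.val_add]
      simp only [Pi.add_apply, Pi.sub_apply, Pi.neg_apply, Pi.smul_apply, hU, hP, hxy]
      by_cases hii : i = i₀
      · subst hii
        rw [Pi.single_eq_same, if_pos rfl, nsmul_eq_mul]
        push_cast [Nat.cast_sub (le_trans hN'lt.le (Nat.le_add_left h _) : N' ≤ ((x i).val + (y i).val) / s i + h)] at key ⊢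
        linear_combination key + h0
      · rw [Pi.single_eq_of_ne hii, if_neg hii, smul_zero, add_zero]
        push_cast at key ⊢
        linear_combination key
    rw [hD]
    exact (Ksub m h s z hh hs hz).neg_mem hUK
  · -- coboundary iff coprime
    have hNZs : ∀ i, NeZero (s i) := fun i => ⟨by have := hs i; omega⟩
    constructor
    · rintro ⟨f, hf0, hf⟩ i hzi
      haveI := hNZs i
      haveI : Fact (1 < s i) := ⟨hs i⟩
      have key : ∀ k l : ZMod (s i),
          (((k.val + l.val) / s i : ℕ) : ZMod h)
            = f (Pi.single i (k + l)) - f (Pi.single i k) - f (Pi.single i l) := by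
        intro k l
        have hprod := hf (Pi.single i k) (Pi.single i l)
        rw [Finset.prod_pow_eq_pow_sum] at hprod
        have hsingle : ∀ j, (if z j = 1 then
            (((Pi.single i k : ∀ j, ZMod (s j)) j).val + ((Pi.single i l : ∀ j, ZMod (s j)) j).val) / s j else 0)
            = if j = i then (k.val + l.val) / s i else 0 := by
          intro j
          haveI := hNZs j
          by_cases hji : j = i
          · subst hji; simp [hzi]
          · simp [Pi.single_eq_of_ne hji, hji]
        rw [Finset.sum_congr rfl fun j _ => hsingle j,
          Finset.sum_ite_eq' Finset.univ i (fun _ => (k.val + l.val) / s i),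
          if_pos (Finset.mem_univ i), ← Pi.single_add] at hprod
        have hcast := (zeta_pow_eq_iff hh _ _).1 hprod
        rw [hcast, ZMod.natCast_val, ZMod.cast_id]
      have hsum1 : ∑ k : ZMod (s i), ((k.val + (1 : ZMod (s i)).val) / s i) = 1 := by
        rw [ZMod.val_one]
        rw [Finset.sum_eq_single (((s i - 1 : ℕ)) : ZMod (s i))]
        · rw [ZMod.val_natCast, Nat.mod_eq_of_lt (by have := hs i; omega),
            Nat.sub_add_cancel (by have := hs i; omega), Nat.div_self (hspos i)]
        · intro k _ hk
          have hkv : k.val ≠ s i - 1 := by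
            intro hc
            exact hk (by rw [← hc, ZMod.natCast_val, ZMod.cast_id])
          have hklt : k.val < s i := k.val_lt
          exact Nat.div_eq_of_lt (by omega)
        · intro hmem; exact absurd (Finset.mem_univ _) hmem
      have hsumF : ∑ k : ZMod (s i),
          (f (Pi.single i (k + 1)) - f (Pi.single i k) - f (Pi.single i 1))
          = -((s i : ZMod h) * f (Pi.single i 1)) := by
        rw [Finset.sum_sub_distrib, Finset.sum_sub_distrib]
        have h1 : ∑ k : ZMod (s i), f (Pi.single i (k + 1))
            = ∑ k : ZMod (s i), f (Pi.single i k) :=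
          Fintype.sum_equiv (Equiv.addRight (1 : ZMod (s i))) _ _ (fun k => rfl)
        rw [h1, sub_self, zero_sub, Finset.sum_const, Finset.card_univ, ZMod.card,
          nsmul_eq_mul]
      have hcast2 : ((∑ k : ZMod (s i), ((k.val + (1 : ZMod (s i)).val) / s i) : ℕ) : ZMod h)
          = ∑ k : ZMod (s i),
            (f (Pi.single i (k + 1)) - f (Pi.single i k) - f (Pi.single i 1)) := by
        rw [Nat.cast_sum]
        exact Finset.sum_congr rfl fun k _ => key k 1
      rw [hsum1, hsumF] at hcast2
      have hunit : IsUnit ((s i : ℕ) : ZMod h) :=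
        IsUnit.of_mul_eq_one (-(f (Pi.single i 1))) (by push_cast at hcast2 ⊢; linear_combination -hcast2)
      exact (ZMod.isUnit_iff_coprime (s i) h).1 hunit
    · intro hcop
      refine ⟨fun x => - ∑ i, if z i = 1
        then ((s i : ZMod h))⁻¹ * (((x i).val : ℕ) : ZMod h) else 0, by simp, ?_⟩
      intro x y
      rw [Finset.prod_pow_eq_pow_sum, zeta_pow_eq_iff hh, ZMod.natCast_val, ZMod.cast_id]
      have hterm : ∀ i, ((if z i = 1 then ((x i).val + (y i).val) / s i else 0 : ℕ) : ZMod h)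
          = (if z i = 1 then (s i : ZMod h)⁻¹ * (((x i).val : ℕ) : ZMod h) else 0)
            + (if z i = 1 then (s i : ZMod h)⁻¹ * (((y i).val : ℕ) : ZMod h) else 0)
            - (if z i = 1 then (s i : ZMod h)⁻¹ * ((((x + y) i).val : ℕ) : ZMod h) else 0) := by
        intro i
        haveI := hNZs i
        by_cases hzi : z i = 1
        · simp only [if_pos hzi]
          have hxy : ((x i + y i).val : ℕ) = ((x i).val + (y i).val) % s i := ZMod.val_add _ _
          have keyN : s i * (((x i).val + (y i).val) / s i) + ((x i).val + (y i).val) % s i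
              = (x i).val + (y i).val := Nat.div_add_mod _ _
          have key : (s i : ZMod h) * ((((x i).val + (y i).val) / s i : ℕ) : ZMod h)
              + ((((x i).val + (y i).val) % s i : ℕ) : ZMod h)
              = (((x i).val : ℕ) : ZMod h) + (((y i).val : ℕ) : ZMod h) := by
            exact_mod_cast congrArg (Nat.cast : ℕ → ZMod h) keyN
          have hinv : (s i : ZMod h)⁻¹ * (s i : ZMod h) = 1 := by
            rw [mul_comm]; exact ZMod.coe_mul_inv_eq_one _ (hcop i hzi)
          rw [Pi.add_apply, hxy]
          linear_combination (s i : ZMod h)⁻¹ * key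
            - (((((x i).val + (y i).val) / s i : ℕ)) : ZMod h) * hinv
        · simp [hzi]
      rw [Nat.cast_sum, Finset.sum_congr rfl fun i _ => hterm i,
        Finset.sum_sub_distrib, Finset.sum_add_distrib]
      ring
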